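/- For all positive integers n_1,...,n_k (k ≥ 3, 2 ≤ t ≤ k), the indicator ϱ_{k,t}(n_1,...,n_k) of t-wise coprimality equals Σ_{d_1|n_1} ⋯ Σ_{d_k|n_k} ψ_{k,t}(d_1,...,d_k). -/

import Mathlib

/-- ϱ_{k,t}: indicator that the components are t-wise relatively prime. -/
def rho (k t : ℕ) (x : Fin k → ℕ) : ℕ :=
  if ∀ S : Finset (Fin k), S.card = t → S.gcd x = 1 then 1 else 0

/-- Local values of ψ_{k,t} on prime powers p^{ν_1},...,p^{ν_k}. -/
def psiLocal (k t : ℕ) (ν : Fin k → ℕ) : ℤ :=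
  if ∀ i, ν i = 0 then 1
  else if (∀ i, ν i ≤ 1) ∧ t ≤ ∑ i, ν i then
    (-1) ^ (∑ i, ν i - t + 1) * ((∑ i, ν i - 1).choose (t - 1))
  else 0

/-- The multiplicative function ψ_{k,t} of k variables, built from its local values. -/
def psi (k t : ℕ) (x : Fin k → ℕ) : ℤ :=
  ∏ p ∈ (∏ i, x i).primeFactors, psiLocal k t (fun i => (x i).factorization p)


open Finset


lemma comb_sub (t' d : ℕ) :
    ∑ i ∈ range (d + 1),
        (-1 : ℤ) ^ i * ((t' + 1 + d).choose (t' + 1 + i)) * ((t' + 1 + i).choose t')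
      = (t' + 1 + d).choose t' := by
  have key : ∀ i ∈ range (d + 1),
      (-1 : ℤ) ^ i * ((t' + 1 + d).choose (t' + 1 + i)) * ((t' + 1 + i).choose t')
        = ((t' + 1 + d).choose t' : ℤ) * ((-1 : ℤ) ^ i * ((d + 1).choose (i + 1))) := by
    intro i hi
    simp only [mem_range] at hi
    have h1 : (t' + 1 + d).choose (t' + 1 + i) * (t' + 1 + i).choose t'
        = (t' + 1 + d).choose t' * ((t' + 1 + d - t').choose (t' + 1 + i - t')) :=
      Nat.choose_mul (by omega)
    have h2 : t' + 1 + d - t' = d + 1 := by omega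
    have h3 : t' + 1 + i - t' = i + 1 := by omega
    rw [h2, h3] at h1
    calc (-1 : ℤ) ^ i * ((t' + 1 + d).choose (t' + 1 + i)) * ((t' + 1 + i).choose t')
        = (-1 : ℤ) ^ i * (((t' + 1 + d).choose (t' + 1 + i) * (t' + 1 + i).choose t' : ℕ) : ℤ) := by
          push_cast; ring
      _ = (-1 : ℤ) ^ i * (((t' + 1 + d).choose t' * (d + 1).choose (i + 1) : ℕ) : ℤ) := by rw [h1]
      _ = ((t' + 1 + d).choose t' : ℤ) * ((-1 : ℤ) ^ i * ((d + 1).choose (i + 1))) := by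
          push_cast; ring
  rw [Finset.sum_congr rfl key, ← Finset.mul_sum]
  have halt : ∑ i ∈ range (d + 1), (-1 : ℤ) ^ i * ((d + 1).choose (i + 1)) = 1 := by
    have h0 : ∑ i ∈ range (d + 2), (-1 : ℤ) ^ i * ((d + 1).choose i) = 0 :=
      Int.alternating_sum_range_choose_of_ne (by omega)
    rw [Finset.sum_range_succ'] at h0
    simp only [Nat.choose_zero_right, Nat.cast_one, pow_zero, one_mul] at h0
    have h1 : ∑ i ∈ range (d + 1), (-1 : ℤ) ^ (i + 1) * ((d + 1).choose (i + 1)) = -1 := by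
      linarith
    calc ∑ i ∈ range (d + 1), (-1 : ℤ) ^ i * ((d + 1).choose (i + 1))
        = -∑ i ∈ range (d + 1), (-1 : ℤ) ^ (i + 1) * ((d + 1).choose (i + 1)) := by
          rw [← Finset.sum_neg_distrib]
          exact Finset.sum_congr rfl fun i _ => by ring
      _ = 1 := by rw [h1]; ring
  rw [halt, mul_one]

lemma comb_main (t' : ℕ) : ∀ d : ℕ,
    ∑ s ∈ range (d + 1),
        (-1 : ℤ) ^ s * ((t' + 1 + d).choose (t' + 1 + s)) * ((t' + s).choose t') = 1 := by
  intro d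
  induction d with
  | zero => simp
  | succ d ih =>
    have pascal : ∀ s : ℕ, (t' + 1 + (d + 1)).choose (t' + 1 + s)
        = (t' + 1 + d).choose (t' + s) + (t' + 1 + d).choose (t' + 1 + s) := by
      intro s
      have e1 : t' + 1 + (d + 1) = (t' + 1 + d) + 1 := by omega
      have e2 : t' + 1 + s = (t' + s) + 1 := by omega
      rw [e1, e2, Nat.choose_succ_succ]
    have split : ∑ s ∈ range (d + 2),
          (-1 : ℤ) ^ s * ((t' + 1 + (d + 1)).choose (t' + 1 + s)) * ((t' + s).choose t')
        = (∑ s ∈ range (d + 2),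
            (-1 : ℤ) ^ s * ((t' + 1 + d).choose (t' + 1 + s)) * ((t' + s).choose t'))
        + ∑ s ∈ range (d + 2),
            (-1 : ℤ) ^ s * ((t' + 1 + d).choose (t' + s)) * ((t' + s).choose t') := by
      rw [← Finset.sum_add_distrib]
      refine Finset.sum_congr rfl fun s _ => ?_
      rw [pascal s]; push_cast; ring
    rw [split]
    have first : ∑ s ∈ range (d + 2),
        (-1 : ℤ) ^ s * ((t' + 1 + d).choose (t' + 1 + s)) * ((t' + s).choose t') = 1 := by
      rw [Finset.sum_range_succ, ih]
      have hz : (t' + 1 + d).choose (t' + 1 + (d + 1)) = 0 := Nat.choose_eq_zero_of_lt (by omega)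
      simp [hz]
    have second : ∑ s ∈ range (d + 2),
        (-1 : ℤ) ^ s * ((t' + 1 + d).choose (t' + s)) * ((t' + s).choose t') = 0 := by
      rw [Finset.sum_range_succ']
      have hstep : ∀ i ∈ range (d + 1),
          (-1 : ℤ) ^ (i + 1) * ((t' + 1 + d).choose (t' + (i + 1))) * ((t' + (i + 1)).choose t')
          = -((-1 : ℤ) ^ i * ((t' + 1 + d).choose (t' + 1 + i)) * ((t' + 1 + i).choose t')) := by
        intro i _
        have e : t' + (i + 1) = t' + 1 + i := by omega
        rw [e]; ring
      rw [Finset.sum_congr rfl hstep, Finset.sum_neg_distrib, comb_sub t' d]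
      simp
    rw [first, second, add_zero]

lemma psiLocal_indicator (k t : ℕ) (S : Finset (Fin k)) :
    psiLocal k t (fun i => if i ∈ S then 1 else 0) =
      if S.card = 0 then 1
      else if t ≤ S.card then (-1 : ℤ) ^ (S.card - t + 1) * ((S.card - 1).choose (t - 1))
      else 0 := by
  have hsum : ∑ i, (if i ∈ S then (1 : ℕ) else 0) = S.card := by
    rw [Finset.sum_ite_mem]
    simp
  have hzero : (∀ i, (if i ∈ S then (1 : ℕ) else 0) = 0) ↔ S.card = 0 := by
    simp only [Finset.card_eq_zero, Finset.eq_empty_iff_forall_notMem]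
    constructor
    · intro h i hi; have := h i; simp [hi] at this
    · intro h i; simp [h i]
  have hle : ∀ i, (if i ∈ S then (1 : ℕ) else 0) ≤ 1 := by
    intro i; split <;> omega
  rw [psiLocal, hsum]
  by_cases h0 : S.card = 0
  · rw [if_pos (hzero.2 h0), if_pos h0]
  · rw [if_neg (fun h => h0 (hzero.1 h)), if_neg h0]
    by_cases h1 : t ≤ S.card
    · rw [if_pos ⟨hle, h1⟩, if_pos h1]
    · rw [if_neg (fun h => h1 h.2), if_neg h1]

lemma psiLocal_ne_zero_imp (k t : ℕ) (ν : Fin k → ℕ) (h : psiLocal k t ν ≠ 0) :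
    ∀ i, ν i ≤ 1 := by
  rw [psiLocal] at h
  split_ifs at h with h1 h2
  · intro i; rw [h1 i]; omega
  · exact h2.1
  · exact absurd rfl h

lemma step2' (k t : ℕ) (E : Fin k → ℕ) :
    ∑ μ ∈ (Fintype.piFinset (fun i => range (E i + 1))).filter (fun μ => ∀ i, μ i ≤ 1),
          psiLocal k t μ
      = ∑ S ∈ (univ.filter fun i => E i ≠ 0).powerset,
          psiLocal k t (fun i => if i ∈ S then 1 else 0) := by
  classical
  refine Finset.sum_nbij' (i := fun μ => univ.filter (fun i => μ i = 1))
      (j := fun S => fun i => if i ∈ S then 1 else 0) ?_ ?_ ?_ ?_ ?_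
  · intro μ hμ
    simp only [Finset.mem_filter, Fintype.mem_piFinset, Finset.mem_range] at hμ
    rw [Finset.mem_powerset]
    intro i hi
    simp only [Finset.mem_filter, Finset.mem_univ, true_and] at hi ⊢
    have h1 := hμ.1 i
    omega
  · intro S hS
    rw [Finset.mem_powerset] at hS
    simp only [Finset.mem_filter, Fintype.mem_piFinset, Finset.mem_range]
    constructor
    · intro i
      by_cases hi : i ∈ S
      · have := hS hi
        simp only [Finset.mem_filter, Finset.mem_univ, true_and] at this
        simp only [if_pos hi]
        omega
      · simp [hi]
    · intro i; split <;> omega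
  · intro μ hμ
    simp only [Finset.mem_filter, Fintype.mem_piFinset, Finset.mem_range] at hμ
    funext i
    simp only [Finset.mem_filter, Finset.mem_univ, true_and]
    have := hμ.2 i
    split <;> omega
  · intro S hS
    ext i
    simp only [Finset.mem_filter, Finset.mem_univ, true_and]
    split <;> simp_all
  · intro μ hμ
    simp only [Finset.mem_filter, Fintype.mem_piFinset, Finset.mem_range] at hμ
    congr 1
    funext i
    simp only [Finset.mem_filter, Finset.mem_univ, true_and]
    have := hμ.2 i
    split <;> omega

lemma step3' (k t : ℕ) (T : Finset (Fin k)) :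
    ∑ S ∈ T.powerset, psiLocal k t (fun i => if i ∈ S then 1 else 0)
      = ∑ j ∈ range (T.card + 1), (T.card.choose j : ℤ) *
          (if j = 0 then 1
           else if t ≤ j then (-1 : ℤ) ^ (j - t + 1) * ((j - 1).choose (t - 1)) else 0) := by
  rw [Finset.sum_powerset]
  refine Finset.sum_congr rfl fun j hj => ?_
  have h : ∀ S ∈ T.powersetCard j, psiLocal k t (fun i => if i ∈ S then 1 else 0)
      = (if j = 0 then 1
         else if t ≤ j then (-1 : ℤ) ^ (j - t + 1) * ((j - 1).choose (t - 1)) else 0) := by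
    intro S hS
    rw [psiLocal_indicator, (Finset.mem_powersetCard.1 hS).2]
  rw [Finset.sum_congr rfl h, Finset.sum_const, Finset.card_powersetCard, nsmul_eq_mul]

lemma step4' (t m : ℕ) (ht : 1 ≤ t) :
    ∑ j ∈ range (m + 1), (m.choose j : ℤ) *
        (if j = 0 then 1
         else if t ≤ j then (-1 : ℤ) ^ (j - t + 1) * ((j - 1).choose (t - 1)) else 0)
      = if m < t then 1 else 0 := by
  rw [Finset.sum_range_succ']
  simp only [Nat.choose_zero_right, Nat.cast_one, if_pos rfl, one_mul]
  by_cases hcase : m < t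
  · rw [if_pos hcase]
    have h : ∀ i ∈ range m, (m.choose (i + 1) : ℤ) *
        (if i + 1 = 0 then 1
         else if t ≤ i + 1 then (-1 : ℤ) ^ (i + 1 - t + 1) * ((i + 1 - 1).choose (t - 1)) else 0)
        = 0 := by
      intro i hi
      simp only [Finset.mem_range] at hi
      rw [if_neg (by omega), if_neg (by omega), mul_zero]
    rw [Finset.sum_congr rfl h]
    simp
  · rw [if_neg hcase]
    push_neg at hcase
    obtain ⟨t', rfl⟩ : ∃ t', t = t' + 1 := ⟨t - 1, by omega⟩
    obtain ⟨d, hd⟩ : ∃ d, m = t' + 1 + d := ⟨m - (t' + 1), by omega⟩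
    have key : ∑ i ∈ range m, (m.choose (i + 1) : ℤ) *
        (if i + 1 = 0 then 1
         else if t' + 1 ≤ i + 1 then
           (-1 : ℤ) ^ (i + 1 - (t' + 1) + 1) * ((i + 1 - 1).choose (t' + 1 - 1)) else 0)
        = -1 := by
      have hz : ∀ i ∈ range m, i ∉ Finset.Ico t' m → (m.choose (i + 1) : ℤ) *
          (if i + 1 = 0 then 1
           else if t' + 1 ≤ i + 1 then
             (-1 : ℤ) ^ (i + 1 - (t' + 1) + 1) * ((i + 1 - 1).choose (t' + 1 - 1)) else 0) = 0 := by
        intro i hi hni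
        simp only [Finset.mem_range] at hi
        simp only [Finset.mem_Ico] at hni
        rw [if_neg (by omega), if_neg (by omega), mul_zero]
      have hsub : Finset.Ico t' m ⊆ range m := by
        intro i hi; simp only [Finset.mem_Ico] at hi; simp [hi.2]
      rw [← Finset.sum_subset hsub hz, Finset.sum_Ico_eq_sum_range]
      have hmt : m - t' = d + 1 := by omega
      rw [hmt]
      have h : ∀ s ∈ range (d + 1), (m.choose (t' + s + 1) : ℤ) *
          (if t' + s + 1 = 0 then 1
           else if t' + 1 ≤ t' + s + 1 then
             (-1 : ℤ) ^ (t' + s + 1 - (t' + 1) + 1) * ((t' + s + 1 - 1).choose (t' + 1 - 1)) else 0)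
          = -((-1 : ℤ) ^ s * ((t' + 1 + d).choose (t' + 1 + s)) * ((t' + s).choose t')) := by
        intro s _
        rw [if_neg (by omega), if_pos (by omega)]
        have e1 : t' + s + 1 - (t' + 1) + 1 = s + 1 := by omega
        have e2 : t' + s + 1 - 1 = t' + s := by omega
        have e3 : t' + 1 - 1 = t' := by omega
        have e4 : t' + s + 1 = t' + 1 + s := by omega
        rw [e1, e2, e3, e4, hd]
        ring
      rw [Finset.sum_congr rfl h, Finset.sum_neg_distrib, comb_main t' d]
    rw [key]
    norm_num

lemma localSum (k t : ℕ) (ht : 1 ≤ t) (E : Fin k → ℕ) :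
    ∑ μ ∈ Fintype.piFinset (fun i => range (E i + 1)), psiLocal k t μ
      = if (univ.filter fun i => E i ≠ 0).card < t then 1 else 0 := by
  classical
  rw [← Finset.sum_filter_of_ne (fun μ _ h => psiLocal_ne_zero_imp k t μ h),
    step2' k t E, step3' k t _, step4' t _ ht]

lemma reconstruct {P : Finset ℕ} {a : ℕ} (ha : a ≠ 0) (hsub : a.primeFactors ⊆ P) :
    ∏ p ∈ P, p ^ a.factorization p = a := by
  conv_rhs => rw [← Nat.factorization_prod_pow_eq_self ha]
  exact (Finsupp.prod_of_support_subset a.factorization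
    (by rwa [Nat.support_factorization]) (fun p n => p ^ n) (fun p _ => pow_zero p)).symm

lemma fact_of_prod_pow {P : Finset ℕ} (hP : ∀ p ∈ P, p.Prime) (g : ℕ → ℕ) {q : ℕ} (hq : q ∈ P) :
    (∏ p ∈ P, p ^ g p).factorization q = g q := by
  have hnz : ∀ p ∈ P, p ^ g p ≠ 0 := fun p hp => pow_ne_zero _ (hP p hp).pos.ne'
  rw [Nat.factorization_prod hnz]
  rw [Finsupp.finset_sum_apply]
  rw [Finset.sum_eq_single_of_mem q hq]
  · rw [Nat.Prime.factorization_pow (hP q hq), Finsupp.single_apply, if_pos rfl]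
  · intro p hp hne
    rw [Nat.Prime.factorization_pow (hP p hp), Finsupp.single_apply, if_neg hne]


theorem rho_eq_sum_divisors_psi (k t : ℕ) (hk : 3 ≤ k) (ht1 : 2 ≤ t) (ht2 : t ≤ k)
    (n : Fin k → ℕ) (hn : ∀ i, 0 < n i) :
    (rho k t n : ℤ) =
      ∑ d ∈ Fintype.piFinset (fun i => (n i).divisors), psi k t d := by
  classical
  have hN : (∏ i, n i) ≠ 0 := Finset.prod_ne_zero_iff.2 fun i _ => (hn i).ne'
  have hP : ∀ p ∈ (∏ i, n i).primeFactors, p.Prime := fun p hp => Nat.prime_of_mem_primeFactors hp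
  -- Step A: rewrite psi d as a product over the primes of ∏ n i
  have stepA : ∀ d ∈ Fintype.piFinset (fun i => (n i).divisors),
      psi k t d = ∏ p ∈ (∏ i, n i).primeFactors,
        psiLocal k t (fun i => (d i).factorization p) := by
    intro d hd
    simp only [Fintype.mem_piFinset, Nat.mem_divisors] at hd
    have hd0 : ∀ i, d i ≠ 0 := fun i => ne_of_gt (Nat.pos_of_dvd_of_pos (hd i).1 (hn i))
    have hdvd : (∏ i, d i) ∣ ∏ i, n i :=
      Finset.prod_dvd_prod_of_dvd _ _ (fun i _ => (hd i).1)
    have hD : (∏ i, d i) ≠ 0 := Finset.prod_ne_zero_iff.2 fun i _ => hd0 i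
    refine Finset.prod_subset (Nat.primeFactors_mono hdvd hN) ?_
    intro p _ hp
    have hall : ∀ i, (d i).factorization p = 0 := by
      intro i
      by_contra hne
      have : p ∈ (d i).primeFactors := by
        rw [← Nat.support_factorization]
        exact Finsupp.mem_support_iff.2 hne
      exact hp (Nat.primeFactors_mono (Finset.dvd_prod_of_mem d (mem_univ i)) hD this)
    rw [psiLocal, if_pos hall]
  rw [Finset.sum_congr rfl stepA]
  -- Step B: bijection with Finset.pi
  have stepB : ∑ d ∈ Fintype.piFinset (fun i => (n i).divisors),
      ∏ p ∈ (∏ i, n i).primeFactors, psiLocal k t (fun i => (d i).factorization p)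
    = ∑ g ∈ (∏ i, n i).primeFactors.pi
        (fun p => Fintype.piFinset (fun i => range ((n i).factorization p + 1))),
        ∏ x ∈ (∏ i, n i).primeFactors.attach, psiLocal k t (g x.1 x.2) := by
    refine Finset.sum_bij' (i := fun d _ => fun p _ => (fun i0 => (d i0).factorization p))
      (j := fun g _ => fun i0 => ∏ x ∈ (∏ i, n i).primeFactors.attach, x.1 ^ (g x.1 x.2 i0))
      ?_ ?_ ?_ ?_ ?_
    · -- maps into pi
      intro d hd
      simp only [Fintype.mem_piFinset, Nat.mem_divisors] at hd
      rw [Finset.mem_pi]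
      intro p _
      rw [Fintype.mem_piFinset]
      intro i0
      rw [Finset.mem_range, Nat.lt_succ_iff]
      have hd0 : d i0 ≠ 0 := ne_of_gt (Nat.pos_of_dvd_of_pos (hd i0).1 (hn i0))
      exact (Nat.factorization_le_iff_dvd hd0 (hn i0).ne').2 (hd i0).1 p
    · -- maps back into piFinset divisors
      intro g hg
      rw [Finset.mem_pi] at hg
      rw [Fintype.mem_piFinset]
      intro i0
      rw [Nat.mem_divisors]
      refine ⟨?_, (hn i0).ne'⟩
      have hge : ∀ x ∈ (∏ i, n i).primeFactors.attach,
          x.1 ^ (g x.1 x.2 i0) ∣ x.1 ^ (n i0).factorization x.1 := by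
        intro x _
        refine pow_dvd_pow _ ?_
        have := hg x.1 x.2
        rw [Fintype.mem_piFinset] at this
        have := this i0
        rw [Finset.mem_range] at this
        omega
      refine dvd_trans (Finset.prod_dvd_prod_of_dvd _ _ hge) ?_
      rw [Finset.prod_attach _ (fun p => p ^ (n i0).factorization p)]
      rw [reconstruct (hn i0).ne' (Nat.primeFactors_mono
        (Finset.dvd_prod_of_mem n (mem_univ i0)) hN)]
    · -- left inverse
      intro d hd
      simp only [Fintype.mem_piFinset, Nat.mem_divisors] at hd
      funext i0
      beta_reduce
      have hd0 : d i0 ≠ 0 := ne_of_gt (Nat.pos_of_dvd_of_pos (hd i0).1 (hn i0))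
      rw [Finset.prod_attach _ (fun p => p ^ (d i0).factorization p)]
      exact reconstruct hd0 (Nat.primeFactors_mono
        (dvd_trans (hd i0).1 (Finset.dvd_prod_of_mem n (mem_univ i0))) hN)
    · -- right inverse
      intro g hg
      funext p hp i0
      beta_reduce
      have hrw : ∀ x ∈ (∏ i, n i).primeFactors.attach,
          x.1 ^ (g x.1 x.2 i0)
            = x.1 ^ (if h : x.1 ∈ (∏ i, n i).primeFactors then g x.1 h i0 else 0) := by
        intro x _
        rw [dif_pos x.2]
      rw [Finset.prod_congr rfl hrw,
        Finset.prod_attach _ (fun p => p ^ (if h : p ∈ (∏ i, n i).primeFactors then g p h i0 else 0)),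
        fact_of_prod_pow hP _ hp, dif_pos hp]
    · -- values agree
      intro d hd
      exact (Finset.prod_attach _ (fun p => psiLocal k t (fun i0 => (d i0).factorization p))).symm
  have stepB2 := Finset.prod_sum (∏ i, n i).primeFactors
    (fun p => Fintype.piFinset (fun i => range ((n i).factorization p + 1)))
    (fun _ μ => psiLocal k t μ)
  rw [stepB, ← stepB2]
  -- Step C: local sums
  have stepC : ∀ p ∈ (∏ i, n i).primeFactors,
      ∑ μ ∈ Fintype.piFinset (fun i => range ((n i).factorization p + 1)), psiLocal k t μ
        = if (univ.filter fun i => p ∣ n i).card < t then 1 else 0 := by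
    intro p hp
    rw [localSum k t (le_trans one_le_two ht1) _]
    have hfil : (univ.filter fun i => (n i).factorization p ≠ 0)
        = (univ.filter fun i => p ∣ n i) := by
      apply Finset.filter_congr
      intro i _
      have h := Nat.Prime.dvd_iff_one_le_factorization (hP p hp) (hn i).ne'
      rw [h, Nat.one_le_iff_ne_zero]
    rw [hfil]
  rw [Finset.prod_congr rfl stepC]
  -- Step D: rho equals the product of indicators
  rw [rho]
  by_cases hrho : ∀ S : Finset (Fin k), S.card = t → S.gcd n = 1
  · rw [if_pos hrho]
    have : ∀ p ∈ (∏ i, n i).primeFactors,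
        (if (univ.filter fun i => p ∣ n i).card < t then (1:ℤ) else 0) = 1 := by
      intro p hp
      rw [if_pos]
      by_contra hc
      push_neg at hc
      obtain ⟨S, hS, hScard⟩ := Finset.exists_subset_card_eq hc
      have hgcd := hrho S hScard
      have hpdvd : p ∣ S.gcd n := by
        refine Finset.dvd_gcd ?_
        intro i hi
        have := hS hi
        simp only [Finset.mem_filter] at this
        exact this.2
      rw [hgcd] at hpdvd
      exact (hP p hp).ne_one (Nat.dvd_one.mp hpdvd)
    rw [Finset.prod_congr rfl this]
    simp
  · rw [if_neg hrho]
    push_neg at hrho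
    obtain ⟨S, hScard, hSgcd⟩ := hrho
    have hSne : S.Nonempty := by
      rw [← Finset.card_pos, hScard]
      exact lt_of_lt_of_le Nat.zero_lt_two ht1
    obtain ⟨p, hpprime, hpdvd⟩ := Nat.exists_prime_and_dvd hSgcd
    have hpn : ∀ i ∈ S, p ∣ n i := fun i hi => dvd_trans hpdvd (Finset.gcd_dvd hi)
    obtain ⟨i0, hi0⟩ := hSne
    have hpP : p ∈ (∏ i, n i).primeFactors := by
      rw [Nat.mem_primeFactors]
      exact ⟨hpprime, dvd_trans (hpn i0 hi0) (Finset.dvd_prod_of_mem n (mem_univ i0)), hN⟩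
    rw [Finset.prod_eq_zero hpP]
    · simp
    · rw [if_neg]
      push_neg
      calc t = S.card := hScard.symm
        _ ≤ (univ.filter fun i => p ∣ n i).card := by
            refine Finset.card_le_card ?_
            intro i hi
            simp only [Finset.mem_filter, mem_univ, true_and]
            exact hpn i hi
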